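/- For the two-link network with ℓ_1(x_1) = x_1, ℓ_2(x_2) = a_2·x_2, the ratio of the subgame perfect equilibrium cost C(x(t)) = (a_2² + 7a_2 + 1)/(9a_2 + 9) to the optimal cost C(x*) = a_2/(a_2+1) equals (a_2² + 7a_2 + 1)/(9a_2), which tends to infinity as a_2 → ∞. -/

import Mathlib

open Filter

/-- The ratio of the subgame perfect equilibrium cost
(a₂²+7a₂+1)/(9a₂+9) to the optimal cost a₂/(a₂+1) equals (a₂²+7a₂+1)/(9a₂),
and this ratio tends to infinity as a₂ → ∞. -/
theorem example_bad_ratio_unbounded :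
    (∀ a2 : ℝ, 0 < a2 →
      ((a2 ^ 2 + 7 * a2 + 1) / (9 * a2 + 9)) / (a2 / (a2 + 1))
        = (a2 ^ 2 + 7 * a2 + 1) / (9 * a2)) ∧
    Tendsto (fun a2 : ℝ => (a2 ^ 2 + 7 * a2 + 1) / (9 * a2)) atTop atTop := by
  constructor
  · intro a2 ha
    have h1 : (9 : ℝ) * a2 + 9 ≠ 0 := by nlinarith
    have h2 : a2 ≠ 0 := ne_of_gt ha
    have h3 : a2 + 1 ≠ 0 := by nlinarith
    field_simp
  · have hdiv : Tendsto (fun x : ℝ => x / 9) atTop atTop :=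
      tendsto_id.atTop_div_const (by norm_num)
    refine tendsto_atTop_mono' _ ?_ hdiv
    filter_upwards [eventually_ge_atTop (1 : ℝ)] with x hx
    rw [div_le_div_iff₀ (by norm_num) (by nlinarith)]
    nlinarith
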